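/- Let ρ be a faithful positive operator on a finite-dimensional complex Hilbert space H, θ an anti-unitary on H, and suppose ρ^{-1/2} θ ρ^{1/2} θ = b·1 for some b ∈ ℂ. Then θ² is a scalar of modulus 1, and in fact θ² = ±1. -/

import Mathlib

open Matrix
open scoped ComplexOrder

private lemma smul_psd {n : Type*} [Fintype n] {M : Matrix n n ℂ} (hM : M.PosSemidef)
    {c : ℝ} (hc : 0 ≤ c) : ((c : ℂ) • M).PosSemidef := by
  refine Matrix.PosSemidef.of_dotProduct_mulVec_nonneg ?_ ?_
  · unfold Matrix.IsHermitian
    rw [conjTranspose_smul, hM.1.eq]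
    congr 1
    simp
  · intro x
    rw [smul_mulVec, dotProduct_smul, smul_eq_mul]
    exact mul_nonneg (by exact_mod_cast hc) (hM.dotProduct_mulVec_nonneg x)

/-- Let `ρ` be a faithful (positive-definite) operator with positive square root
`r = ρ^{1/2}`, and `θ` an anti-unitary (with matrix `A`, `θ v = A (star v)`).
If `ρ^{-1/2} θ ρ^{1/2} θ = b • 1` for some `b ∈ ℂ` (the matrix of the left-hand
side being `r⁻¹ * A * (map star r) * (map star A)`), then `θ²` (with matrix
`A * map star A`) is a modulus-one scalar, and in fact `θ² = ±1`. -/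
theorem stmt10 {n : Type*} [Fintype n] [DecidableEq n] [Nonempty n]
    (ρ r A : Matrix n n ℂ) (hρ : ρ.PosDef) (hr : r.PosDef) (hr2 : r * r = ρ)
    (hA : A ∈ Matrix.unitaryGroup n ℂ)
    (b : ℂ) (hb : r⁻¹ * A * r.map star * A.map star = b • 1) :
    (∃ s : ℂ, ‖s‖ = 1 ∧ A * A.map star = s • 1) ∧
      (A * A.map star = 1 ∨ A * A.map star = -1) := by
  have hdetr : IsUnit r.det := hr.det_pos.ne'.isUnit
  have hmapA : A.map star = Aᴴᵀ := by
    ext i j; simp [conjTranspose_apply]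
  have hmapr : r.map star = rᵀ := by
    ext i j
    have h1 := congr_fun (congr_fun hr.1 j) i
    simp only [conjTranspose_apply] at h1
    simp [Matrix.map_apply, transpose_apply, ← h1]
  rw [hmapA, hmapr] at hb
  rw [hmapA]
  have hA1 : A * Aᴴ = 1 := mem_unitaryGroup_iff.mp hA
  have hA2 : Aᴴ * A = 1 := mem_unitaryGroup_iff'.mp hA
  -- key identity: A rᵀ conj(A) = b r
  have key : A * rᵀ * Aᴴᵀ = b • r := by
    have h : r * (r⁻¹ * A * rᵀ * Aᴴᵀ) = r * (b • 1) := by rw [hb]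
    rwa [show r * (r⁻¹ * A * rᵀ * Aᴴᵀ) = r * r⁻¹ * (A * rᵀ * Aᴴᵀ) from by
      simp only [mul_assoc], mul_nonsing_inv r hdetr, one_mul, mul_smul_comm, mul_one] at h
  set U : Matrix n n ℂ := A * Aᴴᵀ with hUdef
  set Q : Matrix n n ℂ := Aᵀ * rᵀ * Aᴴᵀ with hQdef
  have hCC : Aᴴᵀ * Aᵀ = 1 := by rw [← transpose_mul, hA1, transpose_one]
  have hCC' : Aᵀ * Aᴴᵀ = 1 := by rw [← transpose_mul, hA2, transpose_one]
  have hUQ : U * Q = b • r := by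
    calc U * Q = A * (Aᴴᵀ * Aᵀ) * (rᵀ * Aᴴᵀ) := by simp only [hUdef, hQdef, mul_assoc]
      _ = A * rᵀ * Aᴴᵀ := by rw [hCC, mul_one, mul_assoc]
      _ = b • r := key
  have hct : (Aᴴᵀ)ᴴ = Aᵀ := by
    ext i j
    simp [conjTranspose_apply]
  have hQpsd : Q.PosSemidef := by
    have h := hr.transpose.posSemidef.conjTranspose_mul_mul_same (Aᴴᵀ)
    rwa [hct] at h
  have hUu : Uᴴ * U = 1 := by
    rw [hUdef, conjTranspose_mul, hct]
    calc Aᵀ * Aᴴ * (A * Aᴴᵀ) = Aᵀ * (Aᴴ * A) * Aᴴᵀ := by simp only [mul_assoc]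
      _ = 1 := by rw [hA2, mul_one, hCC']
  have hQsq : Q ^ 2 = ((‖b‖ : ℂ) • r) ^ 2 := by
    have h1 : Q ^ 2 = (U * Q)ᴴ * (U * Q) := by
      rw [conjTranspose_mul, mul_assoc, ← mul_assoc Uᴴ, hUu, one_mul, hQpsd.1.eq, ← pow_two]
    rw [h1, hUQ, conjTranspose_smul, hr.1.eq, smul_mul_assoc, mul_smul_comm, smul_smul,
      smul_pow, ← pow_two r]
    congr 1
    rw [Complex.star_def, RCLike.conj_mul]
    norm_num
  have hQeq : Q = (‖b‖ : ℂ) • r := by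
    open scoped MatrixOrder in
    exact (CFC.sq_eq_sq_iff Q _ hQpsd.nonneg (smul_psd hr.posSemidef (norm_nonneg b)).nonneg).mp hQsq
  -- b ≠ 0
  have hb0 : b ≠ 0 := by
    intro h0
    have hd : A.det * rᵀ.det * (Aᴴᵀ).det = 0 := by
      rw [← det_mul, ← det_mul, key, h0, zero_smul, det_zero]
    rw [det_transpose, det_transpose] at hd
    have hd2 : A.det * Aᴴ.det = 1 := by rw [← det_mul, hA1, det_one]
    have : (A.det * Aᴴ.det) * r.det = 0 := by ring_nf; ring_nf at hd; linear_combination hd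
    rw [hd2, one_mul] at this
    exact hr.det_pos.ne' this
  have hnb : (‖b‖ : ℂ) ≠ 0 := by
    exact_mod_cast norm_ne_zero_iff.mpr hb0
  set s : ℂ := b / (‖b‖ : ℂ) with hsdef
  have hUr : U * r = s • r := by
    have h := hUQ
    rw [hQeq, mul_smul_comm] at h
    calc U * r = (‖b‖ : ℂ)⁻¹ • ((‖b‖ : ℂ) • (U * r)) := by
          rw [smul_smul, inv_mul_cancel₀ hnb, one_smul]
      _ = (‖b‖ : ℂ)⁻¹ • (b • r) := by rw [h]
      _ = s • r := by rw [smul_smul, hsdef, inv_mul_eq_div]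
  have hU : U = s • 1 := by
    calc U = U * (r * r⁻¹) := by rw [mul_nonsing_inv r hdetr, mul_one]
      _ = (U * r) * r⁻¹ := (mul_assoc U r r⁻¹).symm
      _ = (s • r) * r⁻¹ := by rw [hUr]
      _ = s • 1 := by rw [smul_mul_assoc, mul_nonsing_inv r hdetr]
  have hsnorm : ‖s‖ = 1 := by
    rw [hsdef, norm_div]
    rw [Complex.norm_real, Real.norm_of_nonneg (norm_nonneg b)]
    exact div_self (norm_ne_zero_iff.mpr hb0)
  refine ⟨⟨s, hsnorm, hU⟩, ?_⟩
  -- now show s = ±1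
  have h3 : Aᴴᵀ = s • Aᴴ := by
    calc Aᴴᵀ = Aᴴ * A * Aᴴᵀ := by rw [hA2, one_mul]
      _ = Aᴴ * (A * Aᴴᵀ) := by rw [mul_assoc]
      _ = Aᴴ * (s • 1) := by rw [← hUdef, hU]
      _ = s • Aᴴ := by rw [mul_smul_comm, mul_one]
  have h4 : Aᴴ = s • Aᴴᵀ := by
    have h := congrArg Matrix.transpose h3
    rwa [transpose_transpose, transpose_smul] at h
  have h5 : Aᴴ = (s * s) • Aᴴ := by
    calc Aᴴ = s • Aᴴᵀ := h4
      _ = s • (s • Aᴴ) := by rw [h3]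
      _ = (s * s) • Aᴴ := smul_smul s s Aᴴ
  have hAne : (Aᴴ : Matrix n n ℂ) ≠ 0 := by
    intro h
    have : (1 : Matrix n n ℂ) = 0 := by rw [← hA1, h, mul_zero]
    exact one_ne_zero this
  have hss : s * s = 1 := by
    have h6 : (1 - s * s) • Aᴴ = 0 := by
      rw [sub_smul, one_smul, ← h5, sub_self]
    rcases smul_eq_zero.mp h6 with h | h
    · have := sub_eq_zero.mp h
      exact this.symm
    · exact absurd h hAne
  rcases mul_self_eq_one_iff.mp hss with h | h
  · left; rw [hU, h, one_smul]
  · right; rw [hU, h, neg_smul, one_smul]
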